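/- Suppose U is twice continuously differentiable. For every m ≥ 1, the full numerical RAHMC proposal map F = (Φ⁻_ε)^m ∘ (Φ⁺_ε)^m is symplectic: its Jacobian J = D F(z) at every z ∈ ℝᵈ × ℝᵈ satisfies Jᵀ Ω⁻¹ J = Ω⁻¹, where Ω⁻¹ is the 2d×2d block matrix [[0, −I_d],[I_d, 0]]. -/

import Mathlib

open Matrix

noncomputable section

/-- Action of a matrix on a vector in Euclidean space. -/
def mvec {d : ℕ} (A : Matrix (Fin d) (Fin d) ℝ) (p : EuclideanSpace ℝ (Fin d)) :
    EuclideanSpace ℝ (Fin d) :=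
  WithLp.toLp 2 (A.mulVec p)

/-- The leapfrog step `P_ε` with potential `U` and inverse mass matrix `Sinv = Σ⁻¹`. -/
def leapfrog {d : ℕ} (U : EuclideanSpace ℝ (Fin d) → ℝ) (Sinv : Matrix (Fin d) (Fin d) ℝ)
    (ε : ℝ) (z : EuclideanSpace ℝ (Fin d) × EuclideanSpace ℝ (Fin d)) :
    EuclideanSpace ℝ (Fin d) × EuclideanSpace ℝ (Fin d) :=
  let phalf := z.2 - (ε / 2) • gradient U z.1
  let q' := z.1 + ε • mvec Sinv phalf
  (q', phalf - (ε / 2) • gradient U q')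

/-- The momentum-rescaling map `ξ_t(q, p) = (q, e^{γ t} p)`. -/
def xi {d : ℕ} (γ t : ℝ) (z : EuclideanSpace ℝ (Fin d) × EuclideanSpace ℝ (Fin d)) :
    EuclideanSpace ℝ (Fin d) × EuclideanSpace ℝ (Fin d) :=
  (z.1, Real.exp (γ * t) • z.2)

/-- The repelling numerical step `Φ⁺_ε = ξ_{ε/2} ∘ P_ε ∘ ξ_{ε/2}`. -/
def stepPlus {d : ℕ} (U : EuclideanSpace ℝ (Fin d) → ℝ) (Sinv : Matrix (Fin d) (Fin d) ℝ)
    (γ ε : ℝ) :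
    EuclideanSpace ℝ (Fin d) × EuclideanSpace ℝ (Fin d) →
      EuclideanSpace ℝ (Fin d) × EuclideanSpace ℝ (Fin d) :=
  xi γ (ε / 2) ∘ leapfrog U Sinv ε ∘ xi γ (ε / 2)

/-- The attracting numerical step `Φ⁻_ε = ξ_{−ε/2} ∘ P_ε ∘ ξ_{−ε/2}`. -/
def stepMinus {d : ℕ} (U : EuclideanSpace ℝ (Fin d) → ℝ) (Sinv : Matrix (Fin d) (Fin d) ℝ)
    (γ ε : ℝ) :
    EuclideanSpace ℝ (Fin d) × EuclideanSpace ℝ (Fin d) →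
      EuclideanSpace ℝ (Fin d) × EuclideanSpace ℝ (Fin d) :=
  xi γ (-(ε / 2)) ∘ leapfrog U Sinv ε ∘ xi γ (-(ε / 2))


/-- The product basis of the standard bases on `ℝᵈ × ℝᵈ`, indexed by `Fin d ⊕ Fin d`. -/
def phaseBasis (d : ℕ) :
    Module.Basis (Fin d ⊕ Fin d) ℝ (EuclideanSpace ℝ (Fin d) × EuclideanSpace ℝ (Fin d)) :=
  (PiLp.basisFun 2 ℝ (Fin d)).prod (PiLp.basisFun 2 ℝ (Fin d))

/-- The Jacobian matrix of a map on phase space at a point, in the standard basis. -/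
def Jmat {d : ℕ}
    (Φ : EuclideanSpace ℝ (Fin d) × EuclideanSpace ℝ (Fin d) →
      EuclideanSpace ℝ (Fin d) × EuclideanSpace ℝ (Fin d))
    (z : EuclideanSpace ℝ (Fin d) × EuclideanSpace ℝ (Fin d)) :
    Matrix (Fin d ⊕ Fin d) (Fin d ⊕ Fin d) ℝ :=
  LinearMap.toMatrix (phaseBasis d) (phaseBasis d) (fderiv ℝ Φ z).toLinearMap

/-- The block matrix `Ω⁻¹ = [[0, −I_d], [I_d, 0]]`. -/
def Ωinv (d : ℕ) : Matrix (Fin d ⊕ Fin d) (Fin d ⊕ Fin d) ℝ :=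
  Matrix.fromBlocks 0 (-1) 1 0
namespace Rahmc

variable {d : ℕ}

local notation "E" => EuclideanSpace ℝ (Fin d)
local notation "e" => PiLp.basisFun 2 ℝ (Fin d)

lemma phaseBasis_inl (j : Fin d) : phaseBasis d (Sum.inl j) = (e j, 0) :=
  Prod.ext (Module.Basis.prod_apply_inl_fst _ _ _) (Module.Basis.prod_apply_inl_snd _ _ _)

lemma phaseBasis_inr (j : Fin d) : phaseBasis d (Sum.inr j) = (0, e j) :=
  Prod.ext (Module.Basis.prod_apply_inr_fst _ _ _) (Module.Basis.prod_apply_inr_snd _ _ _)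

lemma Jmat_ll (Φ : E × E → E × E) (z : E × E) (i j : Fin d) :
    Jmat Φ z (Sum.inl i) (Sum.inl j) = (fderiv ℝ Φ z (e j, 0)).1 i := by
  rw [Jmat, LinearMap.toMatrix_apply, phaseBasis_inl, phaseBasis,
    Module.Basis.prod_repr_inl, PiLp.basisFun_repr]
  rfl

lemma Jmat_lr (Φ : E × E → E × E) (z : E × E) (i j : Fin d) :
    Jmat Φ z (Sum.inl i) (Sum.inr j) = (fderiv ℝ Φ z (0, e j)).1 i := by
  rw [Jmat, LinearMap.toMatrix_apply, phaseBasis_inr, phaseBasis,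
    Module.Basis.prod_repr_inl, PiLp.basisFun_repr]
  rfl

lemma Jmat_rl (Φ : E × E → E × E) (z : E × E) (i j : Fin d) :
    Jmat Φ z (Sum.inr i) (Sum.inl j) = (fderiv ℝ Φ z (e j, 0)).2 i := by
  rw [Jmat, LinearMap.toMatrix_apply, phaseBasis_inl, phaseBasis,
    Module.Basis.prod_repr_inr, PiLp.basisFun_repr]
  rfl

lemma Jmat_rr (Φ : E × E → E × E) (z : E × E) (i j : Fin d) :
    Jmat Φ z (Sum.inr i) (Sum.inr j) = (fderiv ℝ Φ z (0, e j)).2 i := by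
  rw [Jmat, LinearMap.toMatrix_apply, phaseBasis_inr, phaseBasis,
    Module.Basis.prod_repr_inr, PiLp.basisFun_repr]
  rfl

lemma Jmat_comp {Φ Ψ : E × E → E × E} {z : E × E}
    (hΦ : DifferentiableAt ℝ Φ (Ψ z)) (hΨ : DifferentiableAt ℝ Ψ z) :
    Jmat (Φ ∘ Ψ) z = Jmat Φ (Ψ z) * Jmat Ψ z := by
  rw [Jmat, fderiv_comp z hΦ hΨ]
  rw [ContinuousLinearMap.toLinearMap_comp, LinearMap.toMatrix_comp _ (phaseBasis d)]
  rfl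

/-- Conformally symplectic with factor `c`, plus differentiability. -/
def CS (c : ℝ) (Φ : E × E → E × E) : Prop :=
  ∀ z : E × E, DifferentiableAt ℝ Φ z ∧
    (Jmat Φ z)ᵀ * Ωinv d * Jmat Φ z = c • Ωinv d

lemma CS.comp {c c' : ℝ} {Φ Ψ : E × E → E × E} (hΦ : CS c Φ) (hΨ : CS c' Ψ) :
    CS (c * c') (Φ ∘ Ψ) := by
  intro z
  obtain ⟨h1, e1⟩ := hΦ (Ψ z)
  obtain ⟨h2, e2⟩ := hΨ z
  refine ⟨h1.comp z h2, ?_⟩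
  rw [Jmat_comp h1 h2, transpose_mul]
  calc (Jmat Ψ z)ᵀ * (Jmat Φ (Ψ z))ᵀ * Ωinv d * (Jmat Φ (Ψ z) * Jmat Ψ z)
      = (Jmat Ψ z)ᵀ * ((Jmat Φ (Ψ z))ᵀ * Ωinv d * Jmat Φ (Ψ z)) * Jmat Ψ z := by
        simp only [Matrix.mul_assoc]
    _ = c • ((Jmat Ψ z)ᵀ * Ωinv d * Jmat Ψ z) := by
        rw [e1]
        simp only [Matrix.smul_mul, Matrix.mul_smul]
    _ = (c * c') • Ωinv d := by rw [e2, smul_smul]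

lemma CS_id : CS 1 (id : E × E → E × E) := by
  intro z
  refine ⟨differentiableAt_id, ?_⟩
  have : Jmat (id : E × E → E × E) z = 1 := by
    rw [Jmat, fderiv_id]
    simp [LinearMap.toMatrix_id]
  rw [this]
  simp

lemma CS.iterate {c : ℝ} {Φ : E × E → E × E} (h : CS c Φ) :
    ∀ m : ℕ, CS (c ^ m) (Φ^[m])
  | 0 => by simpa using CS_id
  | n + 1 => by
      rw [Function.iterate_succ']
      have := h.comp (CS.iterate h n)
      rwa [← pow_succ'] at this




lemma shear_up (A : Matrix (Fin d) (Fin d) ℝ) (h : Aᵀ = A) :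
    (fromBlocks 1 A 0 1)ᵀ * Ωinv d * fromBlocks 1 A 0 1 = (1 : ℝ) • Ωinv d := by
  simp [Ωinv, Matrix.fromBlocks_transpose, Matrix.fromBlocks_multiply, h]

lemma shear_lo (A : Matrix (Fin d) (Fin d) ℝ) (h : Aᵀ = A) :
    (fromBlocks 1 0 A 1)ᵀ * Ωinv d * fromBlocks 1 0 A 1 = (1 : ℝ) • Ωinv d := by
  simp [Ωinv, Matrix.fromBlocks_transpose, Matrix.fromBlocks_multiply, h]

lemma diag_scale (a : ℝ) :
    (fromBlocks (1 : Matrix (Fin d) (Fin d) ℝ) 0 0 (a • 1))ᵀ * Ωinv d *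
      fromBlocks 1 0 0 (a • 1) = a • Ωinv d := by
  rw [Ωinv, Matrix.fromBlocks_smul]
  simp [Matrix.fromBlocks_transpose, Matrix.fromBlocks_multiply, Matrix.smul_mul]




def xiL (d : ℕ) (γ t : ℝ) : (E × E) →L[ℝ] (E × E) :=
  (ContinuousLinearMap.fst ℝ E E).prod
    (Real.exp (γ * t) • ContinuousLinearMap.snd ℝ E E)

lemma xi_eq (γ t : ℝ) : xi (d := d) γ t = ⇑(xiL d γ t) := rfl

lemma fderiv_xi (γ t : ℝ) (z : E × E) :
    fderiv ℝ (xi (d := d) γ t) z = xiL d γ t := by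
  rw [xi_eq]; exact (xiL d γ t).fderiv

lemma Jmat_xi (γ t : ℝ) (z : E × E) :
    Jmat (xi γ t) z = fromBlocks 1 0 0 (Real.exp (γ * t) • 1) := by
  ext (i | i) (j | j)
  · rw [Jmat_ll, fderiv_xi]
    simp [xiL, Matrix.one_apply, PiLp.basisFun_apply, EuclideanSpace.single_apply]
  · rw [Jmat_lr, fderiv_xi]
    simp [xiL]
  · rw [Jmat_rl, fderiv_xi]
    simp [xiL]
  · rw [Jmat_rr, fderiv_xi]
    simp [xiL, Matrix.one_apply, PiLp.basisFun_apply, EuclideanSpace.single_apply,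
      Matrix.smul_apply, mul_ite]

lemma CS_xi (γ t : ℝ) : CS (Real.exp (γ * t)) (xi (d := d) γ t) := by
  intro z
  refine ⟨by rw [xi_eq]; exact (xiL d γ t).differentiableAt, ?_⟩
  rw [Jmat_xi]
  exact diag_scale _




def matCLM (M : Matrix (Fin d) (Fin d) ℝ) : E →L[ℝ] E :=
  LinearMap.toContinuousLinearMap (Matrix.toEuclideanLin M)

lemma matCLM_apply (M : Matrix (Fin d) (Fin d) ℝ) (p : E) : matCLM M p = mvec M p := rfl

/-- The drift (position-update) part of leapfrog. -/
def Amap (Sinv : Matrix (Fin d) (Fin d) ℝ) (ε : ℝ) : E × E → E × E :=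
  fun z => (z.1 + ε • mvec Sinv z.2, z.2)

def AL (Sinv : Matrix (Fin d) (Fin d) ℝ) (ε : ℝ) : (E × E) →L[ℝ] (E × E) :=
  ((ContinuousLinearMap.fst ℝ E E) +
      ε • ((matCLM Sinv).comp (ContinuousLinearMap.snd ℝ E E))).prod
    (ContinuousLinearMap.snd ℝ E E)

lemma Amap_eq (Sinv : Matrix (Fin d) (Fin d) ℝ) (ε : ℝ) :
    Amap Sinv ε = ⇑(AL Sinv ε) := rfl

lemma fderiv_Amap (Sinv : Matrix (Fin d) (Fin d) ℝ) (ε : ℝ) (z : E × E) :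
    fderiv ℝ (Amap Sinv ε) z = AL Sinv ε := by
  rw [Amap_eq]; exact (AL Sinv ε).fderiv

lemma Jmat_Amap (Sinv : Matrix (Fin d) (Fin d) ℝ) (ε : ℝ) (z : E × E) :
    Jmat (Amap Sinv ε) z = fromBlocks 1 (ε • Sinv) 0 1 := by
  ext (i | i) (j | j)
  · rw [Jmat_ll, fderiv_Amap]
    simp [AL, matCLM_apply, mvec, Matrix.one_apply, PiLp.basisFun_apply,
      EuclideanSpace.single_apply]
  · rw [Jmat_lr, fderiv_Amap]
    simp [AL, matCLM_apply, mvec, Matrix.smul_apply, PiLp.basisFun_apply]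
  · rw [Jmat_rl, fderiv_Amap]
    simp [AL]
  · rw [Jmat_rr, fderiv_Amap]
    simp [AL, Matrix.one_apply, PiLp.basisFun_apply, EuclideanSpace.single_apply]




/-- The momentum-kick part of leapfrog. -/
def Bmap (U : E → ℝ) (c : ℝ) : E × E → E × E :=
  fun z => (z.1, z.2 - c • gradient U z.1)

def dualCLM (d : ℕ) : StrongDual ℝ E →L[ℝ] E :=
  ((InnerProductSpace.toDual ℝ E).symm.toContinuousLinearEquiv :
    StrongDual ℝ E ≃L[ℝ] E).toContinuousLinearMap

lemma dualCLM_coord (ψ : StrongDual ℝ E) (i : Fin d) :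
    dualCLM d ψ i = ψ (e i) := by
  have h1 : dualCLM d ψ i = @inner ℝ _ _ (dualCLM d ψ : E) ((e i : E)) := by
    rw [PiLp.basisFun_apply]
    show _ = @inner ℝ _ _ (dualCLM d ψ : E) (EuclideanSpace.single i (1:ℝ))
    rw [EuclideanSpace.inner_single_right]
    simp
  rw [h1]
  exact InnerProductSpace.toDual_symm_apply

lemma gradient_hasFDerivAt (U : E → ℝ) (hU : ContDiff ℝ 2 U) (q : E) :
    HasFDerivAt (gradient U) ((dualCLM d).comp (fderiv ℝ (fderiv ℝ U) q)) q := by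
  have h1 : ContDiff ℝ 1 (fderiv ℝ U) := hU.fderiv_right (by norm_num)
  have h2 : HasFDerivAt (fderiv ℝ U) (fderiv ℝ (fderiv ℝ U) q) q :=
    ((h1.differentiable (by norm_num)) q).hasFDerivAt
  exact ((dualCLM d).hasFDerivAt).comp q h2

/-- Hessian matrix of `U` at `q`. -/
def hessM (U : E → ℝ) (q : E) : Matrix (Fin d) (Fin d) ℝ :=
  Matrix.of fun i j => fderiv ℝ (fderiv ℝ U) q (e j) (e i)

lemma hessM_symm (U : E → ℝ) (hU : ContDiff ℝ 2 U) (q : E) :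
    (hessM U q)ᵀ = hessM U q := by
  ext i j
  show fderiv ℝ (fderiv ℝ U) q (e i) (e j) = fderiv ℝ (fderiv ℝ U) q (e j) (e i)
  exact second_derivative_symmetric
    (fun y => ((hU.differentiable (by norm_num)) y).hasFDerivAt)
    (((hU.fderiv_right (n := 2) (m := 1) (by norm_num)).differentiable
      (by norm_num) q).hasFDerivAt) _ _

def BL (U : E → ℝ) (c : ℝ) (q : E) : (E × E) →L[ℝ] (E × E) :=
  (ContinuousLinearMap.fst ℝ E E).prod
    (ContinuousLinearMap.snd ℝ E E -
      c • (((dualCLM d).comp (fderiv ℝ (fderiv ℝ U) q)).comp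
        (ContinuousLinearMap.fst ℝ E E)))

lemma Bmap_hasFDerivAt (U : E → ℝ) (hU : ContDiff ℝ 2 U) (z : E × E) :
    HasFDerivAt (Bmap U c) (BL U c z.1) z := by
  exact hasFDerivAt_fst.prodMk
    (hasFDerivAt_snd.sub
      (((gradient_hasFDerivAt U hU z.1).comp z hasFDerivAt_fst).const_smul c))

lemma Jmat_Bmap (U : E → ℝ) (hU : ContDiff ℝ 2 U) (c : ℝ) (z : E × E) :
    Jmat (Bmap U c) z = fromBlocks 1 0 ((-c) • hessM U z.1) 1 := by
  have hf := (Bmap_hasFDerivAt (c := c) U hU z).fderiv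
  ext (i | i) (j | j)
  · rw [Jmat_ll, hf]
    simp [BL, Matrix.one_apply, PiLp.basisFun_apply, EuclideanSpace.single_apply]
  · rw [Jmat_lr, hf]
    simp [BL]
  · rw [Jmat_rl, hf]
    simp only [BL, ContinuousLinearMap.prod_apply, ContinuousLinearMap.coe_sub',
      Pi.sub_apply, ContinuousLinearMap.coe_smul', Pi.smul_apply,
      ContinuousLinearMap.coe_comp', Function.comp_apply,
      ContinuousLinearMap.coe_fst', ContinuousLinearMap.coe_snd']
    rw [Matrix.fromBlocks_apply₂₁]
    simp only [PiLp.sub_apply, PiLp.smul_apply, smul_eq_mul, Matrix.smul_apply]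
    rw [dualCLM_coord]
    show (0:ℝ) - c * _ = -c * hessM U z.1 i j
    rw [hessM]
    ring_nf
    rfl
  · rw [Jmat_rr, hf]
    simp [BL, Matrix.one_apply, PiLp.basisFun_apply, EuclideanSpace.single_apply,
      dualCLM_coord]




lemma leapfrog_eq (U : E → ℝ) (Sinv : Matrix (Fin d) (Fin d) ℝ) (ε : ℝ) :
    leapfrog U Sinv ε = Bmap U (ε / 2) ∘ Amap Sinv ε ∘ Bmap U (ε / 2) := rfl

lemma CS_Bmap (U : E → ℝ) (hU : ContDiff ℝ 2 U) (c : ℝ) :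
    CS 1 (Bmap U c) := by
  intro z
  refine ⟨(Bmap_hasFDerivAt U hU z).differentiableAt, ?_⟩
  rw [Jmat_Bmap U hU c z]
  refine shear_lo _ ?_
  rw [Matrix.transpose_smul, hessM_symm U hU]

lemma CS_Amap (Sinv : Matrix (Fin d) (Fin d) ℝ) (hs : Sinvᵀ = Sinv) (ε : ℝ) :
    CS 1 (Amap Sinv ε) := by
  intro z
  refine ⟨by rw [Amap_eq]; exact (AL Sinv ε).differentiableAt, ?_⟩
  rw [Jmat_Amap]
  refine shear_up _ ?_
  rw [Matrix.transpose_smul, hs]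

lemma CS_leapfrog (U : E → ℝ) (hU : ContDiff ℝ 2 U)
    (Sinv : Matrix (Fin d) (Fin d) ℝ) (hs : Sinvᵀ = Sinv) (ε : ℝ) :
    CS 1 (leapfrog U Sinv ε) := by
  rw [leapfrog_eq]
  have := (CS_Bmap U hU (ε / 2)).comp ((CS_Amap Sinv hs ε).comp (CS_Bmap U hU (ε / 2)))
  simpa using this

lemma CS_step (U : E → ℝ) (hU : ContDiff ℝ 2 U)
    (Sinv : Matrix (Fin d) (Fin d) ℝ) (hs : Sinvᵀ = Sinv) (γ ε t : ℝ) :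
    CS (Real.exp (γ * t) * Real.exp (γ * t))
      (xi γ t ∘ leapfrog U Sinv ε ∘ xi γ t) := by
  have := (CS_xi γ t).comp ((CS_leapfrog U hU Sinv hs ε).comp (CS_xi γ t))
  simpa [mul_comm] using this

end Rahmc

/-- For `U` twice continuously differentiable and any `m ≥ 1`, the full
numerical RAHMC proposal map `F = (Φ⁻_ε)^m ∘ (Φ⁺_ε)^m` is symplectic: its Jacobian
`J = DF(z)` satisfies `Jᵀ Ω⁻¹ J = Ω⁻¹` at every `z`. -/
theorem rahmc_proposal_symplectic
    (d : ℕ) (hd : 1 ≤ d) (ε : ℝ) (hε : 0 < ε) (γ : ℝ) (hγ : 0 < γ)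
    (U : EuclideanSpace ℝ (Fin d) → ℝ) (hU : ContDiff ℝ 2 U)
    (S : Matrix (Fin d) (Fin d) ℝ) (hSsymm : S.IsSymm) (hSpd : S.PosDef)
    (m : ℕ) (hm : 1 ≤ m) :
    ∀ z : EuclideanSpace ℝ (Fin d) × EuclideanSpace ℝ (Fin d),
      (Jmat ((stepMinus U S⁻¹ γ ε)^[m] ∘ (stepPlus U S⁻¹ γ ε)^[m]) z)ᵀ * Ωinv d *
          Jmat ((stepMinus U S⁻¹ γ ε)^[m] ∘ (stepPlus U S⁻¹ γ ε)^[m]) z =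
        Ωinv d := by
  intro z
  have hs : (S⁻¹)ᵀ = S⁻¹ := by rw [Matrix.transpose_nonsing_inv, hSsymm.eq]
  have hp : Rahmc.CS (Real.exp (γ * (ε / 2)) * Real.exp (γ * (ε / 2)))
      (stepPlus U S⁻¹ γ ε) := Rahmc.CS_step U hU S⁻¹ hs γ ε (ε / 2)
  have hmn : Rahmc.CS (Real.exp (γ * -(ε / 2)) * Real.exp (γ * -(ε / 2)))
      (stepMinus U S⁻¹ γ ε) := Rahmc.CS_step U hU S⁻¹ hs γ ε (-(ε / 2))
  have h := (hmn.iterate m).comp (hp.iterate m)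
  have hc : (Real.exp (γ * -(ε / 2)) * Real.exp (γ * -(ε / 2))) ^ m *
      (Real.exp (γ * (ε / 2)) * Real.exp (γ * (ε / 2))) ^ m = 1 := by
    rw [← mul_pow, ← Real.exp_add, ← Real.exp_add, ← Real.exp_add]
    have : γ * -(ε / 2) + γ * -(ε / 2) + (γ * (ε / 2) + γ * (ε / 2)) = 0 := by ring
    rw [this, Real.exp_zero, one_pow]
  rw [hc] at h
  simpa using (h z).2
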